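/- Let $\{(\Omega_i,\Sigma_i,\mu_i)\}_{i\in\mathbb{N}}$ be a sequence of measure spaces, $\mathscr{C}$ a finite rectangle and $\{\mathscr{C}_n\}_{n\in\mathbb{N}}$ finite rectangles (not necessarily disjoint) with $\mathscr{C} \subset \bigcup_{n\in\mathbb{N}} \mathscr{C}_n$. Then $\mathrm{vol}(\mathscr{C}) \le \sum_{n\in\mathbb{N}} \mathrm{vol}(\mathscr{C}_n)$ (countable subadditivity of the volume function on finite rectangles). -/

import Mathlib

open MeasureTheory Filter Set
open scoped ENNReal

/-- `HasVol μ C v` says that the rectangle `∏ᵢ Cᵢ` is a *finite rectangle*: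
all sides are measurable with finite measure and the infinite product
`∏ᵢ μᵢ(Cᵢ)` converges to the finite value `v ∈ [0,∞)` (its volume). -/
def HasVol {Ω : ℕ → Type*} [∀ i, MeasurableSpace (Ω i)]
    (μ : ∀ i, Measure (Ω i)) (C : ∀ i, Set (Ω i)) (v : ℝ) : Prop :=
  (∀ i, MeasurableSet (C i)) ∧ (∀ i, μ i (C i) ≠ ∞) ∧
    Tendsto (fun m => ∏ i ∈ Finset.range m, (μ i (C i)).toReal) atTop (nhds v)

section Aux

variable {Ω : ℕ → Type*} [∀ i, MeasurableSpace (Ω i)]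

/-- Partially-observed mass of the rectangle `∏_{i<M} E i`: coordinates `< m`
are observed at the point `x`, the rest are averaged. -/
noncomputable def rAux (ν : ∀ i, Measure (Ω i)) (E : ∀ i, Set (Ω i)) (M m : ℕ)
    (x : ∀ i, Ω i) : ℝ≥0∞ :=
  ∏ i ∈ Finset.range M, if i < m then (E i).indicator 1 (x i) else ν i (E i)

lemma rAux_zero (ν : ∀ i, Measure (Ω i)) (E : ∀ i, Set (Ω i)) (M : ℕ) (x : ∀ i, Ω i) :
    rAux ν E M 0 x = ∏ i ∈ Finset.range M, ν i (E i) := by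
  refine Finset.prod_congr rfl fun i _ => ?_
  simp

lemma rAux_eq_one (ν : ∀ i, Measure (Ω i)) (E : ∀ i, Set (Ω i)) {M m : ℕ}
    {x : ∀ i, Ω i} (hx : ∀ i < M, x i ∈ E i) (hm : M ≤ m) :
    rAux ν E M m x = 1 := by
  refine Finset.prod_eq_one fun i hi => ?_
  rw [Finset.mem_range] at hi
  rw [if_pos (lt_of_lt_of_le hi hm)]
  simp [Set.indicator_of_mem (hx i hi)]

lemma measurable_rAux_update (ν : ∀ i, Measure (Ω i)) (E : ∀ i, Set (Ω i))
    (hE : ∀ i, MeasurableSet (E i)) (M m : ℕ) (x : ∀ i, Ω i) :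
    Measurable fun t => rAux ν E M (m + 1) (Function.update x m t) := by
  refine Finset.measurable_prod _ fun i _ => ?_
  by_cases him : i = m
  · subst him
    simp only [Function.update_self, if_pos (Nat.lt_succ_self i)]
    exact (measurable_one.indicator (hE i))
  · simp only [Function.update_of_ne him]
    exact measurable_const

lemma lintegral_rAux (ν : ∀ i, Measure (Ω i)) [∀ i, IsProbabilityMeasure (ν i)]
    (E : ∀ i, Set (Ω i)) (hE : ∀ i, MeasurableSet (E i)) (M m : ℕ) (x : ∀ i, Ω i) :
    ∫⁻ t, rAux ν E M (m + 1) (Function.update x m t) ∂(ν m) = rAux ν E M m x := by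
  by_cases hmM : m < M
  · have hmem : m ∈ Finset.range M := Finset.mem_range.mpr hmM
    have key : ∀ t, rAux ν E M (m + 1) (Function.update x m t)
        = (E m).indicator 1 t *
          ∏ i ∈ (Finset.range M).erase m,
            (if i < m then (E i).indicator 1 (x i) else ν i (E i)) := by
      intro t
      rw [rAux, ← Finset.mul_prod_erase _ _ hmem]
      congr 1
      · simp
      · refine Finset.prod_congr rfl fun i hi => ?_
        have hne : i ≠ m := (Finset.mem_erase.mp hi).1
        rw [Function.update_of_ne hne]
        exact if_congr (by omega) rfl rfl
    simp only [key]
    rw [lintegral_mul_const _ (measurable_one.indicator (hE m)),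
      lintegral_indicator_one (hE m)]
    rw [rAux, ← Finset.mul_prod_erase _ _ hmem, if_neg (lt_irrefl m)]
  · have key : ∀ t, rAux ν E M (m + 1) (Function.update x m t) = rAux ν E M m x := by
      intro t
      refine Finset.prod_congr rfl fun i hi => ?_
      rw [Finset.mem_range] at hi
      have hne : i ≠ m := by omega
      rw [Function.update_of_ne hne]
      exact if_congr (by omega) rfl rfl
    simp only [key]
    simp [lintegral_const]

/-- Core lemma: countable subadditivity for rectangles w.r.t. probability
measures, where the covered rectangle has all sides of full measure. -/
lemma core (ν : ∀ i, Measure (Ω i)) [∀ i, IsProbabilityMeasure (ν i)]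
    (B : ∀ i, Set (Ω i)) (hBm : ∀ i, MeasurableSet (B i)) (hB : ∀ i, ν i (B i) = 1)
    (E : ℕ → ∀ i, Set (Ω i)) (hE : ∀ n i, MeasurableSet (E n i))
    (hcov : Set.univ.pi B ⊆ ⋃ n, Set.univ.pi (E n)) :
    1 ≤ ∑' n, ⨅ m, ∏ i ∈ Finset.range m, ν i (E n i) := by
  by_contra hlt
  push_neg at hlt
  set u : ℕ → ℝ≥0∞ := fun n => ⨅ m, ∏ i ∈ Finset.range m, ν i (E n i) with hu
  have hu_le : ∀ n, u n ≤ 1 := fun n => by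
    simpa using iInf_le (fun m => ∏ i ∈ Finset.range m, ν i (E n i)) 0
  have hSne : ∑' n, u n ≠ ∞ := hlt.ne_top
  have h1S : (1 : ℝ≥0∞) - ∑' n, u n ≠ 0 := by
    intro h
    exact absurd (tsub_eq_zero_iff_le.mp h) (not_le.mpr hlt)
  obtain ⟨ε, hεpos, hεsum⟩ := ENNReal.exists_pos_sum_of_countable h1S ℕ
  have hmn : ∀ n, ∃ m, ∏ i ∈ Finset.range m, ν i (E n i) < u n + ε n := by
    intro n
    have h1 : u n < u n + ε n :=
      ENNReal.lt_add_right ((hu_le n).trans_lt ENNReal.one_lt_top).ne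
        (ENNReal.coe_ne_zero.mpr (hεpos n).ne')
    exact iInf_lt_iff.mp h1
  choose mn hmnlt using hmn
  -- the base bound
  have hp : ∑' n, ∏ i ∈ Finset.range (mn n), ν i (E n i) < 1 := by
    calc ∑' n, ∏ i ∈ Finset.range (mn n), ν i (E n i)
        ≤ ∑' n, (u n + ε n) := ENNReal.tsum_le_tsum fun n => (hmnlt n).le
      _ = (∑' n, u n) + ∑' n, (ε n : ℝ≥0∞) := ENNReal.tsum_add
      _ < (∑' n, u n) + (1 - ∑' n, u n) := ENNReal.add_lt_add_left hSne hεsum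
      _ = 1 := add_tsub_cancel_of_le hlt.le
  -- key step: we can always extend a good prefix
  have step_ex : ∀ (m : ℕ) (x : ∀ i, Ω i),
      (∑' n, rAux ν (E n) (mn n) m x) < 1 →
      ∃ t, t ∈ B m ∧ (∑' n, rAux ν (E n) (mn n) (m + 1) (Function.update x m t)) < 1 := by
    intro m x hx
    by_contra h
    push_neg at h
    have hind : (B m).indicator (1 : Ω m → ℝ≥0∞)
        ≤ fun t => ∑' n, rAux ν (E n) (mn n) (m + 1) (Function.update x m t) := by
      intro t
      by_cases ht : t ∈ B m
      · simpa [Set.indicator_of_mem ht] using h t ht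
      · simp [Set.indicator_of_notMem ht]
    have hcalc : (1 : ℝ≥0∞) ≤ ∑' n, rAux ν (E n) (mn n) m x := by
      calc (1 : ℝ≥0∞) = ν m (B m) := (hB m).symm
        _ = ∫⁻ t, (B m).indicator 1 t ∂(ν m) := (lintegral_indicator_one (hBm m)).symm
        _ ≤ ∫⁻ t, ∑' n, rAux ν (E n) (mn n) (m + 1) (Function.update x m t) ∂(ν m) :=
            lintegral_mono hind
        _ = ∑' n, ∫⁻ t, rAux ν (E n) (mn n) (m + 1) (Function.update x m t) ∂(ν m) :=
            lintegral_tsum fun n =>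
              (measurable_rAux_update ν (E n) (hE n) (mn n) m x).aemeasurable
        _ = ∑' n, rAux ν (E n) (mn n) m x :=
            tsum_congr fun n => lintegral_rAux ν (E n) (hE n) (mn n) m x
    exact absurd hx (not_lt.mpr hcalc)
  -- build the recursive sequence of points
  have hBne : ∀ i, (B i).Nonempty := fun i =>
    nonempty_of_measure_ne_zero (by rw [hB i]; exact one_ne_zero)
  classical
  let x0 : ∀ i, Ω i := fun i => (hBne i).some
  let F : ℕ → (∀ i, Ω i) → (∀ i, Ω i) := fun m x =>
    if h : ∃ t, t ∈ B m ∧ (∑' n, rAux ν (E n) (mn n) (m + 1) (Function.update x m t)) < 1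
    then Function.update x m h.choose else x
  let X : ℕ → ∀ i, Ω i := fun m => Nat.rec x0 F m
  have hX_succ : ∀ m, X (m + 1) = F m (X m) := fun m => rfl
  have hInv : ∀ m, (∀ i < m, X m i ∈ B i) ∧ (∑' n, rAux ν (E n) (mn n) m (X m)) < 1 := by
    intro m
    induction m with
    | zero =>
      refine ⟨by omega, ?_⟩
      have : ∀ n, rAux ν (E n) (mn n) 0 (X 0) = ∏ i ∈ Finset.range (mn n), ν i (E n i) :=
        fun n => rAux_zero ν (E n) (mn n) (X 0)
      simpa [this] using hp
    | succ m ih =>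
      obtain ⟨h1, h2⟩ := ih
      have hex : ∃ t, t ∈ B m ∧
          (∑' n, rAux ν (E n) (mn n) (m + 1) (Function.update (X m) m t)) < 1 :=
        step_ex m (X m) h2
      have hXm1 : X (m + 1) = Function.update (X m) m hex.choose := by
        rw [hX_succ m]
        exact dif_pos hex
      obtain ⟨hch1, hch2⟩ := hex.choose_spec
      constructor
      · intro i hi
        rcases lt_or_eq_of_le (Nat.lt_succ_iff.mp hi) with hi' | hi'
        · rw [hXm1, Function.update_of_ne (by omega)]
          exact h1 i hi'
        · subst hi'
          rw [hXm1, Function.update_self]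
          exact hch1
      · rw [hXm1]
        exact hch2
  -- the limit point
  have hstable : ∀ m i, i < m → X m i = X (m + 1) i := by
    intro m i hi
    rw [hX_succ m]
    show X m i = F m (X m) i
    simp only [F]
    split
    · rw [Function.update_of_ne (by omega : i ≠ m)]
    · rfl
  let ω : ∀ i, Ω i := fun i => X (i + 1) i
  have hω_agree : ∀ m i, i < m → X m i = ω i := by
    intro m
    induction m with
    | zero => omega
    | succ m ih =>
      intro i hi
      rcases lt_or_eq_of_le (Nat.lt_succ_iff.mp hi) with hi' | hi'
      · rw [← hstable m i hi']
        exact ih i hi'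
      · subst hi'; rfl
  have hωB : ω ∈ Set.univ.pi B := by
    intro i _
    exact (hInv (i + 1)).1 i (Nat.lt_succ_self i)
  obtain ⟨n, hn⟩ := Set.mem_iUnion.mp (hcov hωB)
  have hnE : ∀ i, ω i ∈ E n i := fun i => hn i (Set.mem_univ i)
  have hone : rAux ν (E n) (mn n) (mn n) (X (mn n)) = 1 := by
    refine rAux_eq_one ν (E n) (fun i hi => ?_) le_rfl
    rw [hω_agree (mn n) i hi]
    exact hnE i
  have : (1 : ℝ≥0∞) ≤ ∑' n', rAux ν (E n') (mn n') (mn n) (X (mn n)) :=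
    hone ▸ ENNReal.le_tsum n
  exact absurd this (not_le.mpr (hInv (mn n)).2)

end Aux

theorem stmt_7 {Ω : ℕ → Type*} [∀ i, MeasurableSpace (Ω i)] (μ : ∀ i, Measure (Ω i))
    (C : ∀ i, Set (Ω i)) (v : ℝ) (hC : HasVol μ C v)
    (D : ℕ → ∀ i, Set (Ω i)) (w : ℕ → ℝ) (hD : ∀ n, HasVol μ (D n) (w n))
    (hcover : Set.univ.pi C ⊆ ⋃ n, Set.univ.pi (D n)) :
    ENNReal.ofReal v ≤ ∑' n, ENNReal.ofReal (w n) := by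
  obtain ⟨hCm, hCfin, hCtend⟩ := hC
  by_cases hv : v ≤ 0
  · rw [ENNReal.ofReal_eq_zero.mpr hv]
    exact zero_le
  push_neg at hv
  -- all sides of C have positive measure
  have hCpos : ∀ i, μ i (C i) ≠ 0 := by
    intro j hj
    have hev : (fun m => ∏ i ∈ Finset.range m, (μ i (C i)).toReal) =ᶠ[atTop]
        (fun _ => (0 : ℝ)) := by
      filter_upwards [eventually_ge_atTop (j + 1)] with m hm
      exact Finset.prod_eq_zero (Finset.mem_range.mpr (by omega : j < m)) (by simp [hj])
    have hv0 : v = 0 := tendsto_nhds_unique hCtend ((tendsto_congr' hev).mpr tendsto_const_nhds)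
    exact absurd hv0 (by linarith)
  -- normalized measures
  let ν : ∀ i, Measure (Ω i) := fun i => (μ i (C i))⁻¹ • (μ i).restrict (C i)
  have hν_apply : ∀ i (s : Set (Ω i)), MeasurableSet s →
      ν i s = (μ i (C i))⁻¹ * μ i (s ∩ C i) := by
    intro i s hs
    simp [ν, Measure.restrict_apply hs]
  have hνC : ∀ i, ν i (C i) = 1 := by
    intro i
    rw [hν_apply i (C i) (hCm i), Set.inter_self]
    exact ENNReal.inv_mul_cancel (hCpos i) (hCfin i)
  have hνprob : ∀ i, IsProbabilityMeasure (ν i) := by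
    intro i
    constructor
    rw [show ν i Set.univ = (μ i (C i))⁻¹ * μ i (Set.univ ∩ C i) from
      hν_apply i Set.univ MeasurableSet.univ, Set.univ_inter]
    exact ENNReal.inv_mul_cancel (hCpos i) (hCfin i)
  have hcore : 1 ≤ ∑' n, ⨅ m, ∏ i ∈ Finset.range m, ν i (D n i) := by
    have := hνprob
    exact core ν C hCm hνC D (fun n i => (hD n).1 i) hcover
  set u : ℕ → ℝ≥0∞ := fun n => ⨅ m, ∏ i ∈ Finset.range m, ν i (D n i) with hu
  have hu_le : ∀ n, u n ≤ 1 := fun n => by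
    simpa using iInf_le (fun m => ∏ i ∈ Finset.range m, ν i (D n i)) 0
  -- key per-n bound
  have key : ∀ n, ENNReal.ofReal v * u n ≤ ENNReal.ofReal (w n) := by
    intro n
    obtain ⟨hDm, hDfin, hDtend⟩ := hD n
    have hprod_le : ∀ m,
        (∏ i ∈ Finset.range m, μ i (C i)) * u n ≤ ∏ i ∈ Finset.range m, μ i (D n i) := by
      intro m
      have h1 : u n ≤ ∏ i ∈ Finset.range m, ν i (D n i) :=
        iInf_le (fun m => ∏ i ∈ Finset.range m, ν i (D n i)) m
      calc (∏ i ∈ Finset.range m, μ i (C i)) * u n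
          ≤ (∏ i ∈ Finset.range m, μ i (C i)) * ∏ i ∈ Finset.range m, ν i (D n i) :=
            mul_le_mul_right h1 _
        _ = ∏ i ∈ Finset.range m, (μ i (C i) * ν i (D n i)) := by
            rw [← Finset.prod_mul_distrib]
        _ ≤ ∏ i ∈ Finset.range m, μ i (D n i) := by
            refine Finset.prod_le_prod' fun i _ => ?_
            rw [hν_apply i (D n i) (hDm i), ← mul_assoc,
              ENNReal.mul_inv_cancel (hCpos i) (hCfin i), one_mul]
            exact measure_mono Set.inter_subset_left
    have hCeq : ∀ m, ENNReal.ofReal (∏ i ∈ Finset.range m, (μ i (C i)).toReal)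
        = ∏ i ∈ Finset.range m, μ i (C i) := by
      intro m
      rw [← ENNReal.toReal_prod, ENNReal.ofReal_toReal
        (ENNReal.prod_lt_top (fun i _ => (hCfin i).lt_top)).ne]
    have hDeq : ∀ m, ENNReal.ofReal (∏ i ∈ Finset.range m, (μ i (D n i)).toReal)
        = ∏ i ∈ Finset.range m, μ i (D n i) := by
      intro m
      rw [← ENNReal.toReal_prod, ENNReal.ofReal_toReal
        (ENNReal.prod_lt_top (fun i _ => (hDfin i).lt_top)).ne]
    have hCt : Tendsto (fun m => ∏ i ∈ Finset.range m, μ i (C i)) atTop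
        (nhds (ENNReal.ofReal v)) := by
      refine Tendsto.congr (fun m => hCeq m) ?_
      exact (ENNReal.continuous_ofReal.tendsto v).comp hCtend
    have hDt : Tendsto (fun m => ∏ i ∈ Finset.range m, μ i (D n i)) atTop
        (nhds (ENNReal.ofReal (w n))) := by
      refine Tendsto.congr (fun m => hDeq m) ?_
      exact (ENNReal.continuous_ofReal.tendsto (w n)).comp hDtend
    have hLt : Tendsto (fun m => (∏ i ∈ Finset.range m, μ i (C i)) * u n) atTop
        (nhds (ENNReal.ofReal v * u n)) :=
      ENNReal.Tendsto.mul_const hCt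
        (Or.inr ((hu_le n).trans_lt ENNReal.one_lt_top).ne)
    exact le_of_tendsto_of_tendsto' hLt hDt hprod_le
  calc ENNReal.ofReal v = ENNReal.ofReal v * 1 := (mul_one _).symm
    _ ≤ ENNReal.ofReal v * ∑' n, u n := mul_le_mul_right hcore _
    _ = ∑' n, ENNReal.ofReal v * u n := ENNReal.tsum_mul_left.symm
    _ ≤ ∑' n, ENNReal.ofReal (w n) := ENNReal.tsum_le_tsum key
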